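/- In the free group on {x_0, x_1}, setting x_{k+1} := x_0^{-k} x_1 x_0^k for k ≥ 1, the relations x_4^{x_1} = x_5, x_5^{x_1} = x_6, and x_6^{x_1} = x_7 are consequences of the two defining relations x_2^{x_1} = x_3 and x_3^{x_1} = x_4 (i.e., they hold in the group ⟨x_0, x_1 | x_2^{x_1} = x_3, x_3^{x_1} = x_4⟩). -/

import Mathlib

/-- The generator `x_0` of the free group on two generators. -/
def a : FreeGroup (Fin 2) := FreeGroup.of 0

/-- The generator `x_1` of the free group on two generators. -/
def b : FreeGroup (Fin 2) := FreeGroup.of 1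

/-- `X k = x_{k+1} = x_0^{-k} x_1 x_0^k` in the free group on `x_0, x_1`. -/
def X (k : ℕ) : FreeGroup (Fin 2) := (a ^ k)⁻¹ * b * a ^ k

/-- The two relators of the finite presentation of Thompson's group F:
`x_1⁻¹ x_2 x_1 x_3⁻¹` and `x_1⁻¹ x_3 x_1 x_4⁻¹`. -/
def rels2 : Set (FreeGroup (Fin 2)) :=
  {b⁻¹ * X 1 * b * (X 2)⁻¹, b⁻¹ * X 2 * b * (X 3)⁻¹}

/-- In `⟨x_0, x_1 | x_2^{x_1} = x_3, x_3^{x_1} = x_4⟩`, the relations `x_4^{x_1} = x_5`,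
`x_5^{x_1} = x_6`, and `x_6^{x_1} = x_7` hold. -/
theorem higher_relations_consequence :
    ((QuotientGroup.mk (b⁻¹ * X 3 * b) : PresentedGroup rels2) = QuotientGroup.mk (X 4)) ∧
    ((QuotientGroup.mk (b⁻¹ * X 4 * b) : PresentedGroup rels2) = QuotientGroup.mk (X 5)) ∧
    ((QuotientGroup.mk (b⁻¹ * X 5 * b) : PresentedGroup rels2) = QuotientGroup.mk (X 6)) := by
  classical
  let π : FreeGroup (Fin 2) →* PresentedGroup rels2 := PresentedGroup.mk rels2
  -- images of the generators and of the `X k`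
  set A : PresentedGroup rels2 := π a with hA
  let Y : ℕ → PresentedGroup rels2 := fun k => π (X k)
  have hY0 : Y 0 = π b := by
    simp only [Y, X, pow_zero, inv_one, one_mul, mul_one]
  have hstep : ∀ k, Y (k + 1) = A⁻¹ * Y k * A := by
    intro k
    have : X (k + 1) = a⁻¹ * X k * a := by
      simp only [X, pow_succ]
      group
    simp only [Y, this, map_mul, map_inv, hA]
  -- relators are trivial in the quotient
  have hrel : ∀ r ∈ rels2, π r = 1 := by
    intro r hr
    have : r ∈ Subgroup.normalClosure rels2 := Subgroup.subset_normalClosure hr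
    exact (QuotientGroup.eq_one_iff r).2 this
  have hr1 : (Y 0)⁻¹ * Y 1 * Y 0 = Y 2 := by
    have := hrel (b⁻¹ * X 1 * b * (X 2)⁻¹) (Or.inl rfl)
    simp only [map_mul, map_inv] at this
    have h := mul_eq_one_iff_eq_inv.mp this
    rw [inv_inv] at h
    simpa [Y, hY0, mul_assoc] using h
  have hr2 : (Y 0)⁻¹ * Y 2 * Y 0 = Y 3 := by
    have := hrel (b⁻¹ * X 2 * b * (X 3)⁻¹) (Or.inr rfl)
    simp only [map_mul, map_inv] at this
    have h := mul_eq_one_iff_eq_inv.mp this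
    rw [inv_inv] at h
    simpa [Y, hY0, mul_assoc] using h
  -- conjugated relators: `(Y k)⁻¹ * Y (k+1) * Y k = Y (k+2)` for all k
  have hr1k : ∀ k, (Y k)⁻¹ * Y (k + 1) * Y k = Y (k + 2) := by
    intro k
    induction k with
    | zero => exact hr1
    | succ n ih =>
      have h2 : Y (n + 2) = A⁻¹ * Y (n + 1) * A := hstep (n + 1)
      have h3 : Y (n + 3) = A⁻¹ * Y (n + 2) * A := hstep (n + 2)
      show (Y (n + 1))⁻¹ * Y (n + 2) * Y (n + 1) = Y (n + 3)
      calc (Y (n + 1))⁻¹ * Y (n + 2) * Y (n + 1)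
          = A⁻¹ * ((Y n)⁻¹ * Y (n + 1) * Y n) * A := by rw [h2, hstep n]; group
        _ = A⁻¹ * Y (n + 2) * A := by rw [ih]
        _ = Y (n + 3) := h3.symm
  -- the key derivations
  have g1 : (Y 0)⁻¹ * Y 3 * Y 0 = Y 4 := by
    have e1 : Y 3 = (Y 1)⁻¹ * Y 2 * Y 1 := (hr1k 1).symm
    rw [e1]
    have comm : Y 1 * Y 0 = Y 0 * Y 2 := by
      rw [← hr1]; group
    calc (Y 0)⁻¹ * ((Y 1)⁻¹ * Y 2 * Y 1) * Y 0
        = (Y 1 * Y 0)⁻¹ * Y 2 * (Y 1 * Y 0) := by group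
      _ = (Y 0 * Y 2)⁻¹ * Y 2 * (Y 0 * Y 2) := by rw [comm]
      _ = (Y 2)⁻¹ * ((Y 0)⁻¹ * Y 2 * Y 0) * Y 2 := by group
      _ = (Y 2)⁻¹ * Y 3 * Y 2 := by rw [hr2]
      _ = Y 4 := hr1k 2
  have g2 : (Y 0)⁻¹ * Y 4 * Y 0 = Y 5 := by
    have e1 : Y 4 = (Y 2)⁻¹ * Y 3 * Y 2 := (hr1k 2).symm
    rw [e1]
    have comm : Y 2 * Y 0 = Y 0 * Y 3 := by
      rw [← hr2]; group
    calc (Y 0)⁻¹ * ((Y 2)⁻¹ * Y 3 * Y 2) * Y 0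
        = (Y 2 * Y 0)⁻¹ * Y 3 * (Y 2 * Y 0) := by group
      _ = (Y 0 * Y 3)⁻¹ * Y 3 * (Y 0 * Y 3) := by rw [comm]
      _ = (Y 3)⁻¹ * ((Y 0)⁻¹ * Y 3 * Y 0) * Y 3 := by group
      _ = (Y 3)⁻¹ * Y 4 * Y 3 := by rw [g1]
      _ = Y 5 := hr1k 3
  have g3 : (Y 0)⁻¹ * Y 5 * Y 0 = Y 6 := by
    have e1 : Y 5 = (Y 3)⁻¹ * Y 4 * Y 3 := (hr1k 3).symm
    rw [e1]
    have comm : Y 3 * Y 0 = Y 0 * Y 4 := by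
      rw [← g1]; group
    calc (Y 0)⁻¹ * ((Y 3)⁻¹ * Y 4 * Y 3) * Y 0
        = (Y 3 * Y 0)⁻¹ * Y 4 * (Y 3 * Y 0) := by group
      _ = (Y 0 * Y 4)⁻¹ * Y 4 * (Y 0 * Y 4) := by rw [comm]
      _ = (Y 4)⁻¹ * ((Y 0)⁻¹ * Y 4 * Y 0) * Y 4 := by group
      _ = (Y 4)⁻¹ * Y 5 * Y 4 := by rw [g2]
      _ = Y 6 := hr1k 4
  refine ⟨?_, ?_, ?_⟩
  · have := g1
    show π (b⁻¹ * X 3 * b) = π (X 4)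
    simpa [Y, hY0, map_mul, map_inv, mul_assoc] using this
  · have := g2
    show π (b⁻¹ * X 4 * b) = π (X 5)
    simpa [Y, hY0, map_mul, map_inv, mul_assoc] using this
  · have := g3
    show π (b⁻¹ * X 5 * b) = π (X 6)
    simpa [Y, hY0, map_mul, map_inv, mul_assoc] using this
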